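/- For each N ≥ 2 and 1 ≤ j ≤ N, the map ρ_{N,j} defined on the free group on γ'_1,…,γ'_{6N−4} by the explicit transposition assignments of the paper (ρ(γ'_1) = ρ(γ'_{6N−4}) = (1 2); ρ(γ'_{2+6(k−1)}) = ρ(γ'_{3+6(k−1)}) = (2, 3k) and ρ(γ'_{4+6(k−1)}) = ρ(γ'_{5+6(k−1)}) = (3k, 3k+1), ρ(γ'_{6+6(k−1)}) = ρ(γ'_{7+6(k−1)}) = (3k+1, 3k+2) for 1 ≤ k ≤ j−1; and ρ(γ'_{2+6(ℓ−1)}) = ρ(γ'_{3+6(ℓ−1)}) = (3ℓ+1, 3ℓ+2), ρ(γ'_{4+6(ℓ−1)}) = ρ(γ'_{5+6(ℓ−1)}) = (3ℓ, 3ℓ+1), ρ(γ'_{6+6(ℓ−1)}) = ρ(γ'_{7+6(ℓ−1)}) = (2, 3ℓ) for j ≤ ℓ ≤ N−1) has image a transitive subgroup of S_{3N−1}. -/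

import Mathlib

open Fin.NatCast in
/-- The covering monodromy transposition assigned by the paper to the `x`-th branch
point (0-indexed `x`, corresponding to the 1-indexed generator `γ'_{x+1}`) of the
simple branched covering `q_{N,j}`. Letters of `S_{3N−1}` are shifted down by one,
so the paper's letter `ℓ ∈ {1,…,3N−1}` is `ℓ−1 : Fin (3N−1)`; e.g. the paper's
transposition `(1 2)` is `Equiv.swap 0 1`, `(2 3k)` is `Equiv.swap 1 (3k−1)`, etc. -/
def branchPerm (N j : ℕ) [NeZero (3 * N - 1)] (x : Fin (6 * N - 4)) :
    Equiv.Perm (Fin (3 * N - 1)) :=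
  let i := (x : ℕ) + 1
  if i = 1 ∨ i = 6 * N - 4 then
    Equiv.swap ((0 : ℕ) : Fin (3 * N - 1)) ((1 : ℕ) : Fin (3 * N - 1))
  else
    let k := (i - 2) / 6 + 1
    let r := (i - 2) % 6
    if k ≤ j - 1 then
      if r < 2 then Equiv.swap ((1 : ℕ) : Fin (3 * N - 1)) ((3 * k - 1 : ℕ) : Fin (3 * N - 1))
      else if r < 4 then
        Equiv.swap ((3 * k - 1 : ℕ) : Fin (3 * N - 1)) ((3 * k : ℕ) : Fin (3 * N - 1))
      else Equiv.swap ((3 * k : ℕ) : Fin (3 * N - 1)) ((3 * k + 1 : ℕ) : Fin (3 * N - 1))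
    else
      if r < 2 then
        Equiv.swap ((3 * k : ℕ) : Fin (3 * N - 1)) ((3 * k + 1 : ℕ) : Fin (3 * N - 1))
      else if r < 4 then
        Equiv.swap ((3 * k - 1 : ℕ) : Fin (3 * N - 1)) ((3 * k : ℕ) : Fin (3 * N - 1))
      else Equiv.swap ((1 : ℕ) : Fin (3 * N - 1)) ((3 * k - 1 : ℕ) : Fin (3 * N - 1))

/-- The covering monodromy `ρ_{N,j} : F_{6N−4} → S_{3N−1}` of the simple branched
covering `q_{N,j}`, defined on the free group on `γ'_1,…,γ'_{6N−4}` by the explicit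
transposition assignments of the paper. -/
def rhoNj (N j : ℕ) [NeZero (3 * N - 1)] :
    FreeGroup (Fin (6 * N - 4)) →* Equiv.Perm (Fin (3 * N - 1)) :=
  FreeGroup.lift (branchPerm N j)

lemma mem_of_gen (N j : ℕ) [NeZero (3 * N - 1)] (x : Fin (6 * N - 4)) :
    branchPerm N j x ∈ (rhoNj N j).range :=
  ⟨FreeGroup.of x, by simp [rhoNj]⟩

open Fin.NatCast in
lemma branchPerm_eval (N j : ℕ) [NeZero (3 * N - 1)] (v k : ℕ) (hv : v < 6 * N - 4)
    (hk : (v - 1) / 6 + 1 = k) (h1 : 1 ≤ v) (h2 : v + 1 ≠ 6 * N - 4) :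
    branchPerm N j ⟨v, hv⟩ =
    if k ≤ j - 1 then
      if (v - 1) % 6 < 2 then
        Equiv.swap ((1 : ℕ) : Fin (3 * N - 1)) ((3 * k - 1 : ℕ) : Fin (3 * N - 1))
      else if (v - 1) % 6 < 4 then
        Equiv.swap ((3 * k - 1 : ℕ) : Fin (3 * N - 1)) ((3 * k : ℕ) : Fin (3 * N - 1))
      else Equiv.swap ((3 * k : ℕ) : Fin (3 * N - 1)) ((3 * k + 1 : ℕ) : Fin (3 * N - 1))
    else
      if (v - 1) % 6 < 2 then
        Equiv.swap ((3 * k : ℕ) : Fin (3 * N - 1)) ((3 * k + 1 : ℕ) : Fin (3 * N - 1))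
      else if (v - 1) % 6 < 4 then
        Equiv.swap ((3 * k - 1 : ℕ) : Fin (3 * N - 1)) ((3 * k : ℕ) : Fin (3 * N - 1))
      else Equiv.swap ((1 : ℕ) : Fin (3 * N - 1)) ((3 * k - 1 : ℕ) : Fin (3 * N - 1)) := by
  subst hk
  simp only [branchPerm]
  rw [if_neg (by omega)]
  have h : v + 1 - 2 = v - 1 := by omega
  rw [h]

open Fin.NatCast in
lemma swaps_mem (N j : ℕ) [NeZero (3 * N - 1)] (hN : 2 ≤ N) (k : ℕ)
    (hk1 : 1 ≤ k) (hkN : k + 1 ≤ N) :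
    Equiv.swap ((1 : ℕ) : Fin (3 * N - 1)) ((3 * k - 1 : ℕ) : Fin (3 * N - 1)) ∈ (rhoNj N j).range ∧
    Equiv.swap ((3 * k - 1 : ℕ) : Fin (3 * N - 1)) ((3 * k : ℕ) : Fin (3 * N - 1)) ∈ (rhoNj N j).range ∧
    Equiv.swap ((3 * k : ℕ) : Fin (3 * N - 1)) ((3 * k + 1 : ℕ) : Fin (3 * N - 1)) ∈ (rhoNj N j).range := by
  have m1 := mem_of_gen N j ⟨6 * k - 5, by omega⟩
  have m2 := mem_of_gen N j ⟨6 * k - 3, by omega⟩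
  have m3 := mem_of_gen N j ⟨6 * k - 1, by omega⟩
  rw [branchPerm_eval N j (6 * k - 5) k (by omega) (by omega) (by omega) (by omega)] at m1
  rw [branchPerm_eval N j (6 * k - 3) k (by omega) (by omega) (by omega) (by omega)] at m2
  rw [branchPerm_eval N j (6 * k - 1) k (by omega) (by omega) (by omega) (by omega)] at m3
  by_cases hkj : k ≤ j - 1
  · rw [if_pos hkj, if_pos (by omega)] at m1
    rw [if_pos hkj, if_neg (by omega), if_pos (by omega)] at m2
    rw [if_pos hkj, if_neg (by omega), if_neg (by omega)] at m3
    exact ⟨m1, m2, m3⟩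
  · rw [if_neg hkj, if_pos (by omega)] at m1
    rw [if_neg hkj, if_neg (by omega), if_pos (by omega)] at m2
    rw [if_neg hkj, if_neg (by omega), if_neg (by omega)] at m3
    exact ⟨m3, m2, m1⟩

open Fin.NatCast in
/-- the image of the covering monodromy `ρ_{N,j}` is a transitive
subgroup of `S_{3N−1}` (connectedness of the cover). -/
theorem rhoNj_transitive (N j : ℕ) [NeZero (3 * N - 1)]
    (hN : 2 ≤ N) (h1 : 1 ≤ j) (hj : j ≤ N) :
    ∀ a b : Fin (3 * N - 1), ∃ π ∈ (rhoNj N j).range, π a = b := by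
  have hrefl : ∀ a : Fin (3 * N - 1), ∃ π ∈ (rhoNj N j).range, π a = a :=
    fun a => ⟨1, one_mem _, rfl⟩
  have hsymm : ∀ a b : Fin (3 * N - 1),
      (∃ π ∈ (rhoNj N j).range, π a = b) → ∃ π ∈ (rhoNj N j).range, π b = a := by
    rintro a b ⟨π, hπ, rfl⟩
    exact ⟨π⁻¹, inv_mem hπ, by simp⟩
  have htrans : ∀ a b c : Fin (3 * N - 1),
      (∃ π ∈ (rhoNj N j).range, π a = b) → (∃ π ∈ (rhoNj N j).range, π b = c) →
      ∃ π ∈ (rhoNj N j).range, π a = c := by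
    rintro a b c ⟨π, hπ, rfl⟩ ⟨σ, hσ, rfl⟩
    exact ⟨σ * π, mul_mem hσ hπ, rfl⟩
  have hswap : ∀ u v : Fin (3 * N - 1), Equiv.swap u v ∈ (rhoNj N j).range →
      ∃ π ∈ (rhoNj N j).range, π u = v :=
    fun u v h => ⟨_, h, Equiv.swap_apply_left u v⟩
  have key : ∀ m : ℕ, m < 3 * N - 1 →
      ∃ π ∈ (rhoNj N j).range, π 0 = ((m : ℕ) : Fin (3 * N - 1)) := by
    intro m
    induction m using Nat.strong_induction_on with
    | _ m ih =>
      intro hm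
      by_cases hm0 : m = 0
      · subst hm0; simpa using hrefl 0
      by_cases hm1 : m = 1
      · subst hm1
        have m0 := mem_of_gen N j ⟨0, by omega⟩
        have e0 : branchPerm N j ⟨0, by omega⟩ =
            Equiv.swap ((0 : ℕ) : Fin (3 * N - 1)) ((1 : ℕ) : Fin (3 * N - 1)) := by
          simp only [branchPerm]
          exact if_pos (Or.inl trivial)
        rw [e0] at m0
        have := hswap _ _ m0
        simpa using this
      · obtain ⟨k, hk1, hkN, hcase⟩ :
            ∃ k, 1 ≤ k ∧ k + 1 ≤ N ∧ (m = 3 * k - 1 ∨ m = 3 * k ∨ m = 3 * k + 1) :=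
          ⟨(m + 1) / 3, by omega, by omega, by omega⟩
        obtain ⟨s1, s2, s3⟩ := swaps_mem N j hN k hk1 hkN
        have r1 : ∃ π ∈ (rhoNj N j).range, π 0 = ((1 : ℕ) : Fin (3 * N - 1)) :=
          ih 1 (by omega) (by omega)
        have r2 := htrans _ _ _ r1 (hswap _ _ s1)
        have r3 := htrans _ _ _ r2 (hswap _ _ s2)
        have r4 := htrans _ _ _ r3 (hswap _ _ s3)
        rcases hcase with h | h | h <;> rw [h] <;> assumption
  intro a b
  have ha := key a.val a.isLt
  have hb := key b.val b.isLt
  rw [Fin.cast_val_eq_self] at ha hb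
  exact htrans _ _ _ (hsymm _ _ ha) hb
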